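/- Let $f : \Delta \to \mathbb{R}^2$ be an affine map from the equilateral triangle $\Delta$ with vertices $(0,0)$, $(1,0)$, $(1/2, \sqrt{3}/2)$ to a triangle $\Delta'$ whose side lengths are $\ell_1, \ell_2, \ell_3$. Then $\int_\Delta |\nabla f(z)|^2 \, dz \leq 3(\ell_1^2 + \ell_2^2 + \ell_3^2)$. -/

import Mathlib

open MeasureTheory

/-- Dirichlet energy bound for an affine map from the unit equilateral triangle
(with vertices `(0,0)`, `(1,0)`, `(1/2, √3/2)`) to a triangle with side lengths
`ℓ₁, ℓ₂, ℓ₃`: the integral over the triangle of the squared Frobenius norm of the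
(constant) Jacobian of `f` is at most `3(ℓ₁² + ℓ₂² + ℓ₃²)`. -/
theorem dirichlet_energy_affine_triangle
    (f : EuclideanSpace ℝ (Fin 2) →ᵃ[ℝ] EuclideanSpace ℝ (Fin 2))
    (ℓ₁ ℓ₂ ℓ₃ : ℝ)
    (h₁ : ℓ₁ = dist (f (!₂[0, 0] : EuclideanSpace ℝ (Fin 2)))
                    (f (!₂[1, 0] : EuclideanSpace ℝ (Fin 2))))
    (h₂ : ℓ₂ = dist (f (!₂[1, 0] : EuclideanSpace ℝ (Fin 2)))
                    (f (!₂[1/2, Real.sqrt 3 / 2] : EuclideanSpace ℝ (Fin 2))))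
    (h₃ : ℓ₃ = dist (f (!₂[0, 0] : EuclideanSpace ℝ (Fin 2)))
                    (f (!₂[1/2, Real.sqrt 3 / 2] : EuclideanSpace ℝ (Fin 2)))) :
    ∫ _z in convexHull ℝ
        ({!₂[0, 0], !₂[1, 0], !₂[1/2, Real.sqrt 3 / 2]} : Set (EuclideanSpace ℝ (Fin 2))),
      (∑ i : Fin 2, ∑ j : Fin 2, (f.linear (EuclideanSpace.single j 1) i) ^ 2)
      ≤ 3 * (ℓ₁ ^ 2 + ℓ₂ ^ 2 + ℓ₃ ^ 2) := by
  classical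
  set a : Fin 2 → ℝ := fun i => f.linear (EuclideanSpace.single 0 1) i with ha
  set b : Fin 2 → ℝ := fun i => f.linear (EuclideanSpace.single 1 1) i with hb
  have hlin : ∀ (x : EuclideanSpace ℝ (Fin 2)) (i : Fin 2),
      f.linear x i = x 0 * a i + x 1 * b i := by
    intro x i
    have hx : x = x 0 • EuclideanSpace.single (0 : Fin 2) (1:ℝ)
        + x 1 • EuclideanSpace.single (1 : Fin 2) (1:ℝ) := by
      ext j
      fin_cases j <;> simp [EuclideanSpace.single_apply]
    conv_lhs => rw [hx]
    simp [ha, hb, mul_comm]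
  have key : ∀ (x y : EuclideanSpace ℝ (Fin 2)),
      dist (f x) (f y) ^ 2
        = ∑ i : Fin 2, ((x 0 - y 0) * a i + (x 1 - y 1) * b i) ^ 2 := by
    intro x y
    rw [EuclideanSpace.dist_eq, Real.sq_sqrt (Finset.sum_nonneg fun i _ => sq_nonneg _)]
    refine Finset.sum_congr rfl fun i _ => ?_
    rw [Real.dist_eq, sq_abs]
    have hsub : f x i - f y i = f.linear (x - y) i := by
      have := f.linearMap_vsub x y
      rw [vsub_eq_sub, vsub_eq_sub] at this
      rw [this]; rfl
    rw [hsub, hlin (x - y) i]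
    norm_num
  have h3 : Real.sqrt 3 ^ 2 = 3 := Real.sq_sqrt (by norm_num)
  have E1 : ℓ₁ ^ 2 = ∑ i : Fin 2, ((0 - 1) * a i + (0 - 0) * b i) ^ 2 := by
    rw [h₁, key]; simp
  have E2 : ℓ₂ ^ 2 = ∑ i : Fin 2,
      ((1 - 1/2) * a i + (0 - Real.sqrt 3 / 2) * b i) ^ 2 := by
    rw [h₂, key]; simp
  have E3 : ℓ₃ ^ 2 = ∑ i : Fin 2,
      ((0 - 1/2) * a i + (0 - Real.sqrt 3 / 2) * b i) ^ 2 := by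
    rw [h₃, key]; simp
  have hsum : ℓ₁ ^ 2 + ℓ₂ ^ 2 + ℓ₃ ^ 2
      = 3/2 * ((a 0 ^ 2 + b 0 ^ 2) + (a 1 ^ 2 + b 1 ^ 2)) := by
    rw [E1, E2, E3, Fin.sum_univ_two, Fin.sum_univ_two, Fin.sum_univ_two]
    linear_combination ((b 0 ^ 2 + b 1 ^ 2) / 2) * h3
  have hC : (∑ i : Fin 2, ∑ j : Fin 2, (f.linear (EuclideanSpace.single j 1) i) ^ 2)
      = (a 0 ^ 2 + b 0 ^ 2) + (a 1 ^ 2 + b 1 ^ 2) := by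
    simp [Fin.sum_univ_two, ha, hb]
  set S : Set (EuclideanSpace ℝ (Fin 2)) :=
    convexHull ℝ ({!₂[0, 0], !₂[1, 0], !₂[1/2, Real.sqrt 3 / 2]} :
      Set (EuclideanSpace ℝ (Fin 2))) with hS
  have hsubS : S ⊆ Metric.closedBall (0 : EuclideanSpace ℝ (Fin 2)) 1 := by
    rw [hS]
    refine convexHull_min ?_ (convex_closedBall _ _)
    intro p hp
    simp only [Set.mem_insert_iff, Set.mem_singleton_iff] at hp
    rcases hp with h | h | h <;> subst h <;>
      rw [Metric.mem_closedBall, EuclideanSpace.dist_eq] <;>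
      refine le_trans (Real.sqrt_le_sqrt ?_) (le_of_eq Real.sqrt_one) <;>
      simp [Fin.sum_univ_two, Real.dist_eq] <;>
      nlinarith [h3, Real.sqrt_nonneg (3:ℝ)]
  have hvol : (volume S).toReal ≤ 4 := by
    have h1 : volume S ≤ volume (Metric.closedBall (0 : EuclideanSpace ℝ (Fin 2)) 1) :=
      measure_mono hsubS
    rw [EuclideanSpace.volume_closedBall] at h1
    have hcard : Fintype.card (Fin 2) = 2 := by simp
    rw [hcard] at h1
    have hγ : Real.Gamma ((2:ℕ) / 2 + 1) = 1 := by
      norm_num [Real.Gamma_two]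
    rw [hγ] at h1
    have hπ : Real.sqrt Real.pi ^ 2 = Real.pi := Real.sq_sqrt Real.pi_nonneg
    rw [hπ] at h1
    simp only [ENNReal.ofReal_one, one_pow, one_mul, div_one] at h1
    have := ENNReal.toReal_mono (by simp) h1
    rw [ENNReal.toReal_ofReal Real.pi_nonneg] at this
    linarith [Real.pi_le_four]
  rw [setIntegral_const, smul_eq_mul, hC, measureReal_def]
  have hL1 : 0 ≤ ℓ₁ ^ 2 := sq_nonneg _
  have hL2 : 0 ≤ ℓ₂ ^ 2 := sq_nonneg _
  have hL3 : 0 ≤ ℓ₃ ^ 2 := sq_nonneg _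
  have htr : (0:ℝ) ≤ (volume S).toReal := ENNReal.toReal_nonneg
  nlinarith [hsum, hvol, htr, hL1, hL2, hL3]
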